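/- Let R be a nonsingular M-matrix with e'R ≥ 0' and p a nonnegative probability vector. Then the matrix R(I − pe') has a simple zero eigenvalue, and all its other eigenvalues have strictly positive real part. -/

import Mathlib

open Matrix


lemma geomG {K : ℕ} (N : Matrix (Fin K) (Fin K) ℝ) (hN : ∀ i j, 0 ≤ N i j)
    (s t : ℝ) (hs : 0 ≤ s) (hcol : ∀ j, ∑ i, N i j ≤ s) (hts : s < t) :
    ∃ G : Matrix (Fin K) (Fin K) ℝ, (∀ i j, 0 ≤ G i j) ∧
      (t • (1 : Matrix (Fin K) (Fin K) ℝ) - N) * G = 1 ∧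
      G * (t • (1 : Matrix (Fin K) (Fin K) ℝ) - N) = 1 ∧ (∀ j, 1 ≤ t * G j j) := by
  have ht0 : 0 < t := lt_of_le_of_lt hs hts
  have htne : t ≠ 0 := ht0.ne'
  have hpow : ∀ k i j, 0 ≤ (N ^ k) i j := by
    intro k
    induction k with
    | zero => intro i j; simp [Matrix.one_apply]; positivity
    | succ n ih =>
        intro i j
        rw [pow_succ, Matrix.mul_apply]
        exact Finset.sum_nonneg fun l _ => mul_nonneg (ih i l) (hN l j)
  have hcolpow : ∀ k j, ∑ i, (N ^ k) i j ≤ s ^ k := by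
    intro k
    induction k with
    | zero => intro j; simp [Matrix.one_apply]
    | succ n ih =>
        intro j
        have h0 : ∑ i, (N ^ (n + 1)) i j = ∑ l, (∑ i, N i l) * (N ^ n) l j := by
          rw [pow_succ' N n]
          simp only [Matrix.mul_apply]
          rw [Finset.sum_comm]
          simp [Finset.sum_mul]
        rw [h0, pow_succ']
        calc ∑ l, (∑ i, N i l) * (N ^ n) l j ≤ ∑ l, s * (N ^ n) l j :=
              Finset.sum_le_sum fun l _ => mul_le_mul_of_nonneg_right (hcol l) (hpow n l j)
          _ = s * ∑ l, (N ^ n) l j := by rw [Finset.mul_sum]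
          _ ≤ s * s ^ n := mul_le_mul_of_nonneg_left (ih j) hs
  have hentry : ∀ k i j, (N ^ k) i j ≤ s ^ k := fun k i j =>
    le_trans (Finset.single_le_sum (fun l (_ : l ∈ Finset.univ) => hpow k l j) (Finset.mem_univ i)) (hcolpow k j)
  have hgeo : Summable (fun k : ℕ => (s / t) ^ k * (1 / t)) :=
    (summable_geometric_of_lt_one (div_nonneg hs ht0.le) ((div_lt_one ht0).mpr hts)).mul_right _
  have hsumm : ∀ i j, Summable (fun k => (N ^ k) i j / t ^ (k + 1)) := by
    intro i j
    refine Summable.of_nonneg_of_le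
      (fun k => div_nonneg (hpow k i j) (pow_nonneg ht0.le _)) (fun k => ?_) hgeo
    calc (N ^ k) i j / t ^ (k + 1) ≤ s ^ k / t ^ (k + 1) := by
          gcongr
          exact hentry k i j
      _ = (s / t) ^ k * (1 / t) := by rw [div_pow, pow_succ]; ring
  set G : Matrix (Fin K) (Fin K) ℝ := fun i j => ∑' k, (N ^ k) i j / t ^ (k + 1) with hG
  have hGnn : ∀ i j, 0 ≤ G i j := fun i j =>
    tsum_nonneg (fun k => div_nonneg (hpow k i j) (pow_nonneg ht0.le _))
  have hkey : (t • (1 : Matrix (Fin K) (Fin K) ℝ) - N) * G = 1 := by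
    ext i k
    rw [Matrix.mul_apply]
    have he : ∀ j, ((t • (1 : Matrix (Fin K) (Fin K) ℝ) - N)) i j * G j k
        = t * ((1 : Matrix (Fin K) (Fin K) ℝ) i j * G j k) - N i j * G j k := by
      intro j
      simp [Matrix.sub_apply, Matrix.smul_apply, smul_eq_mul]
      ring
    rw [Finset.sum_congr rfl (fun j _ => he j)]
    rw [Finset.sum_sub_distrib, ← Finset.mul_sum]
    have h1 : ∑ j, (1 : Matrix (Fin K) (Fin K) ℝ) i j * G j k = G i k := by
      simp [Matrix.one_apply]
    rw [h1]
    have htG : t * G i k = ∑' m, (N ^ m) i k / t ^ m := by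
      rw [hG]
      rw [← tsum_mul_left]
      congr 1; funext m
      rw [pow_succ]
      field_simp
    have hNG : ∑ j, N i j * G j k = ∑' m, (N ^ (m + 1)) i k / t ^ (m + 1) := by
      have h2 : ∀ j, N i j * G j k = ∑' m, N i j * ((N ^ m) j k / t ^ (m + 1)) := by
        intro j; rw [hG, ← tsum_mul_left]
      rw [Finset.sum_congr rfl (fun j _ => h2 j)]
      rw [← Summable.tsum_finsetSum (fun j _ => Summable.mul_left _ (hsumm j k))]
      congr 1; funext m
      rw [pow_succ' N m, Matrix.mul_apply, Finset.sum_div]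
      exact Finset.sum_congr rfl fun j _ => by ring
    rw [htG, hNG]
    have hs0 : Summable (fun m => (N ^ m) i k / t ^ m) := by
      have h3 := (hsumm i k).mul_left t
      refine h3.congr fun m => ?_
      rw [pow_succ]
      field_simp
    rw [Summable.tsum_eq_zero_add hs0]
    simp [Matrix.one_apply]
  have hkey2 : G * (t • (1 : Matrix (Fin K) (Fin K) ℝ) - N) = 1 := mul_eq_one_comm.mp hkey
  refine ⟨G, hGnn, hkey, hkey2, ?_⟩
  intro j
  have hd := congrArg (fun M => M j j) hkey2
  simp only [Matrix.mul_apply, Matrix.one_apply_eq] at hd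
  have he : ∀ l, G j l * (t • (1 : Matrix (Fin K) (Fin K) ℝ) - N) l j
      = t * (G j l * (1 : Matrix (Fin K) (Fin K) ℝ) l j) - G j l * N l j := by
    intro l; simp [Matrix.sub_apply, Matrix.smul_apply, smul_eq_mul]; ring
  rw [Finset.sum_congr rfl (fun l _ => he l), Finset.sum_sub_distrib, ← Finset.mul_sum] at hd
  have h1 : ∑ l, G j l * (1 : Matrix (Fin K) (Fin K) ℝ) l j = G j j := by simp [Matrix.one_apply]
  rw [h1] at hd
  have h2 : 0 ≤ ∑ l, G j l * N l j := Finset.sum_nonneg fun l _ => mul_nonneg (hGnn j l) (hN l j)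
  linarith

/-- Let `R` be a nonsingular M-matrix with `e'R ≥ 0'` and `p` a nonnegative probability
vector. Then `R(I − pe')` has a simple zero eigenvalue (its kernel is one-dimensional),
and all its other eigenvalues have strictly positive real part. -/
theorem RIpe_simple_zero_eigenvalue {K : ℕ} (R N : Matrix (Fin K) (Fin K) ℝ) (s : ℝ)
    (hs : 0 < s) (hN : ∀ i j, 0 ≤ N i j)
    (hR : R = s • (1 : Matrix (Fin K) (Fin K) ℝ) - N)
    (hρ : ∀ μ ∈ spectrum ℂ (N.map (Complex.ofReal)), ‖μ‖ < s)
    (heR : ∀ j, 0 ≤ ∑ i, R i j)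
    (p : Fin K → ℝ) (hp : ∀ i, 0 ≤ p i) (hp1 : ∑ i, p i = 1) :
    Module.finrank ℝ
        (LinearMap.ker (Matrix.toLin'
          (R * ((1 - Matrix.vecMulVec p (fun _ => (1:ℝ))) : Matrix (Fin K) (Fin K) ℝ)))) = 1 ∧
    ∀ μ ∈ spectrum ℂ
        ((R * ((1 - Matrix.vecMulVec p (fun _ => (1:ℝ))) : Matrix (Fin K) (Fin K) ℝ)).map (Complex.ofReal)),
      μ ≠ 0 → 0 < μ.re := by
  constructor
  · set Q : Matrix (Fin K) (Fin K) ℝ := 1 - Matrix.vecMulVec p (fun _ => (1:ℝ)) with hQ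
    -- R has nonzero determinant
    have hsnot : (s : ℂ) ∉ spectrum ℂ (N.map Complex.ofReal) := by
      intro h
      have h2 := hρ _ h
      rw [Complex.norm_real, Real.norm_eq_abs, abs_of_pos hs] at h2
      exact lt_irrefl _ h2
    have hmapR : R.map Complex.ofReal
        = algebraMap ℂ (Matrix (Fin K) (Fin K) ℂ) (s : ℂ) - N.map Complex.ofReal := by
      rw [hR, Algebra.algebraMap_eq_smul_one]
      ext i j
      simp [Matrix.map_apply, Matrix.sub_apply, Matrix.smul_apply, Matrix.one_apply, smul_eq_mul]
      split_ifs <;> simp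
    have hdet : R.det ≠ 0 := by
      have hu : IsUnit (R.map Complex.ofReal) := by
        rw [hmapR]
        exact spectrum.notMem_iff.mp hsnot
      have hu2 : IsUnit ((Complex.ofRealHom).mapMatrix R).det := (Matrix.isUnit_iff_isUnit_det _).mp hu
      rw [← RingHom.map_det] at hu2
      intro h
      rw [h] at hu2
      simp at hu2
    have hpne : p ≠ 0 := by
      intro h
      rw [h] at hp1
      simp at hp1
    have hQp : Q.mulVec p = 0 := by
      funext i
      rw [hQ, Matrix.sub_mulVec, Matrix.one_mulVec]
      simp only [Pi.sub_apply, Matrix.mulVec, Matrix.vecMulVec_apply, dotProduct]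
      simp only [mul_one]
      rw [← Finset.mul_sum, hp1, mul_one]
      simp
    have hker : LinearMap.ker (Matrix.toLin' (R * Q)) = Submodule.span ℝ {p} := by
      apply le_antisymm
      · intro x hx
        rw [LinearMap.mem_ker, Matrix.toLin'_apply] at hx
        have h1 : R.mulVec (Q.mulVec x) = 0 := by
          rw [Matrix.mulVec_mulVec]; exact hx
        have h2 : Q.mulVec x = 0 := by
          by_contra h
          exact hdet (Matrix.exists_mulVec_eq_zero_iff.mp ⟨_, h, h1⟩)
      -- x i = p i * (∑ x j)
        have h3 : x = (∑ j, x j) • p := by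
          funext i
          have := congrFun h2 i
          rw [hQ, Matrix.sub_mulVec, Matrix.one_mulVec] at this
          simp only [Pi.sub_apply, Matrix.mulVec, Matrix.vecMulVec_apply, dotProduct, mul_one] at this
          rw [← Finset.mul_sum, Pi.zero_apply, sub_eq_zero] at this
          simp only [Pi.smul_apply, smul_eq_mul]
          rw [this, mul_comm]
        rw [h3]
        exact Submodule.smul_mem _ _ (Submodule.mem_span_singleton_self p)
      · rw [Submodule.span_le, Set.singleton_subset_iff]
        rw [SetLike.mem_coe, LinearMap.mem_ker, Matrix.toLin'_apply, ← Matrix.mulVec_mulVec, hQp,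
          Matrix.mulVec_zero]
    rw [hker]
    exact finrank_span_singleton hpne
  · intro μ hμ hμ0
    by_contra hre
    push_neg at hre
    set Q : Matrix (Fin K) (Fin K) ℝ := 1 - Matrix.vecMulVec p (fun _ => (1:ℝ)) with hQ
    set A : Matrix (Fin K) (Fin K) ℂ := (R * Q).map Complex.ofReal with hA
    -- extract an eigenvector
    have hdet0 : (algebraMap ℂ (Matrix (Fin K) (Fin K) ℂ) μ - A).det = 0 := by
      by_contra h
      exact (spectrum.mem_iff.mp hμ) ((Matrix.isUnit_iff_isUnit_det _).mpr (isUnit_iff_ne_zero.mpr h))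
    obtain ⟨x, hx0, hxe⟩ := Matrix.exists_mulVec_eq_zero_iff.mpr hdet0
    have hAx : A.mulVec x = μ • x := by
      rw [Algebra.algebraMap_eq_smul_one, Matrix.sub_mulVec, smul_mulVec,
        Matrix.one_mulVec, sub_eq_zero] at hxe
      exact hxe.symm
    -- complexified matrices
    set RC : Matrix (Fin K) (Fin K) ℂ := R.map Complex.ofReal with hRC
    set pC : Fin K → ℂ := fun i => (p i : ℂ) with hpC
    set QC : Matrix (Fin K) (Fin K) ℂ := Q.map Complex.ofReal with hQC
    have hAC : A = RC * QC := Matrix.map_mul (f := Complex.ofRealHom)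
    set y : Fin K → ℂ := QC.mulVec x with hy
    have hQCform : QC = 1 - Matrix.vecMulVec pC (fun _ => (1:ℂ)) := by
      ext i j
      simp [hQC, hQ, Matrix.map_apply, Matrix.sub_apply, Matrix.vecMulVec_apply, Matrix.one_apply,
        hpC]
      split_ifs <;> simp
    have hQCvec : ∀ z : Fin K → ℂ, QC.mulVec z = z - (∑ j, z j) • pC := by
      intro z
      funext i
      rw [hQCform, Matrix.sub_mulVec, Matrix.one_mulVec]
      simp only [Pi.sub_apply, Matrix.mulVec, Matrix.vecMulVec_apply, dotProduct, mul_one,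
        Pi.smul_apply, smul_eq_mul]
      rw [← Finset.mul_sum, mul_comm]
    have hRy : RC.mulVec y = μ • x := by
      rw [hy, Matrix.mulVec_mulVec, ← hAC, hAx]
    have hy0 : y ≠ 0 := by
      intro h
      rw [h, Matrix.mulVec_zero] at hRy
      exact hx0 (by
        funext i
        have := congrFun hRy i
        simp only [Pi.zero_apply, Pi.smul_apply, smul_eq_mul] at this
        simp only [Pi.zero_apply]
        rcases mul_eq_zero.mp this.symm with h' | h'
        · exact absurd h' hμ0
        · exact h')
    set α : ℂ := ∑ i, (RC.mulVec y) i with hα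
    have hQRy : QC.mulVec (RC.mulVec y) = μ • y := by
      rw [hRy, Matrix.mulVec_smul, hy]
    have hRyi : ∀ i, (RC.mulVec y) i = μ * y i + α * pC i := by
      intro i
      have := congrFun hQRy i
      rw [hQCvec] at this
      simp only [Pi.sub_apply, Pi.smul_apply, smul_eq_mul] at this
      rw [← hα] at this
      linear_combination this
    have hNy : ∀ i, ∑ j, (N i j : ℂ) * y j = ((s : ℂ) - μ) * y i - α * pC i := by
      intro i
      have hNC : ∀ j, (N i j : ℂ) = (s : ℂ) * (if i = j then 1 else 0) - RC i j := by
        intro j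
        rw [hRC, Matrix.map_apply, hR]
        simp [Matrix.sub_apply, Matrix.smul_apply, Matrix.one_apply, smul_eq_mul]
        split_ifs <;> push_cast <;> ring
      rw [Finset.sum_congr rfl (fun j _ => by rw [hNC j])]
      simp only [sub_mul, Finset.sum_sub_distrib]
      have h1 : ∑ j, (s : ℂ) * (if i = j then 1 else 0) * y j = (s : ℂ) * y i := by
        simp [Finset.sum_ite_eq, mul_ite]
      have h2 : ∑ j, RC i j * y j = (RC.mulVec y) i := rfl
      rw [h1, h2, hRyi i]
      ring
    -- moduli
    set u : Fin K → ℝ := fun i => ‖y i‖ with hu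
    set t : ℝ := ‖(s : ℂ) - μ‖ with ht
    have hunn : ∀ i, 0 ≤ u i := fun i => norm_nonneg _
    have hts : s < t := by
      have ht2 : t ^ 2 = (s - μ.re) ^ 2 + μ.im ^ 2 := by
        rw [ht, Complex.sq_norm, Complex.normSq_apply]
        simp [Complex.sub_re, Complex.sub_im, Complex.ofReal_re, Complex.ofReal_im]
        ring
      have hsq : s ^ 2 < t ^ 2 := by
        rcases (by simpa [Complex.ext_iff] using hμ0 : ¬(μ.re = 0 ∧ μ.im = 0)) with h
        by_cases hre0 : μ.re = 0
        · have him : μ.im ≠ 0 := by tauto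
          nlinarith [sq_nonneg μ.im, sq_pos_of_ne_zero him]
        · have hrelt : μ.re < 0 := lt_of_le_of_ne hre hre0
          nlinarith [sq_nonneg μ.im]
      exact lt_of_pow_lt_pow_left₀ 2 (norm_nonneg _) hsq
    have hui : ∀ i, t * u i ≤ ‖α‖ * p i + ∑ j, N i j * u j := by
      intro i
      have e1 : ((s : ℂ) - μ) * y i = (∑ j, (N i j : ℂ) * y j) + α * pC i := by
        rw [hNy i]; ring
      calc t * u i = ‖((s : ℂ) - μ) * y i‖ := by rw [norm_mul]
        _ = ‖(∑ j, (N i j : ℂ) * y j) + α * pC i‖ := by rw [e1]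
        _ ≤ ‖∑ j, (N i j : ℂ) * y j‖ + ‖α * pC i‖ :=
            norm_add_le _ _
        _ ≤ (∑ j, N i j * u j) + ‖α‖ * p i := by
            gcongr
            · calc ‖∑ j, (N i j : ℂ) * y j‖ ≤ ∑ j, ‖(N i j : ℂ) * y j‖ :=
                  norm_sum_le _ _
              _ = ∑ j, N i j * u j := by
                  refine Finset.sum_congr rfl fun j _ => ?_
                  rw [norm_mul, Complex.norm_real, Real.norm_eq_abs, abs_of_nonneg (hN i j)]
            · rw [norm_mul, hpC, Complex.norm_real, Real.norm_eq_abs, abs_of_nonneg (hp i)]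
        _ = ‖α‖ * p i + ∑ j, N i j * u j := by ring
    -- column sums of N
    set c : Fin K → ℝ := fun j => ∑ i, R i j with hc
    have hcolN : ∀ j, ∑ i, N i j = s - c j := by
      intro j
      have : ∀ i, N i j = s * (if i = j then 1 else 0) - R i j := by
        intro i
        rw [hR]
        simp only [Matrix.sub_apply, Matrix.smul_apply, Matrix.one_apply, smul_eq_mul]
        ring
      rw [Finset.sum_congr rfl fun i _ => this i]
      rw [Finset.sum_sub_distrib]
      simp [Finset.sum_ite_eq, mul_ite]
      rfl
    have hcolNs : ∀ j, ∑ i, N i j ≤ s := fun j => by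
      rw [hcolN j]; linarith [heR j]
    obtain ⟨G, hGnn, hG1, hG2, hGd⟩ := geomG N hN s t hs.le hcolNs hts
    set v : Fin K → ℝ := G.mulVec p with hv
    have hvnn : ∀ i, 0 ≤ v i := by
      intro i
      rw [hv]
      simp only [Matrix.mulVec, dotProduct]
      exact Finset.sum_nonneg fun k _ => mul_nonneg (hGnn i k) (hp k)
    have hstar : ∀ i, ((t • (1 : Matrix (Fin K) (Fin K) ℝ) - N).mulVec u) i
        ≤ ‖α‖ * p i := by
      intro i
      have : ((t • (1 : Matrix (Fin K) (Fin K) ℝ) - N).mulVec u) i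
          = t * u i - ∑ j, N i j * u j := by
        simp only [Matrix.mulVec, dotProduct, Matrix.sub_apply, Matrix.smul_apply,
          Matrix.one_apply, smul_eq_mul, sub_mul, Finset.sum_sub_distrib, mul_ite, mul_one, mul_zero]
        simp [Finset.sum_ite_eq']
      rw [this]
      linarith [hui i]
    have huv : ∀ i, u i ≤ ‖α‖ * v i := by
      intro i
      have hid : u = G.mulVec ((t • (1 : Matrix (Fin K) (Fin K) ℝ) - N).mulVec u) := by
        rw [Matrix.mulVec_mulVec, hG2, Matrix.one_mulVec]
      calc u i = (G.mulVec ((t • (1 : Matrix (Fin K) (Fin K) ℝ) - N).mulVec u)) i := congrFun hid i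
        _ = ∑ k, G i k * ((t • (1 : Matrix (Fin K) (Fin K) ℝ) - N).mulVec u) k := rfl
        _ ≤ ∑ k, G i k * (‖α‖ * p k) :=
            Finset.sum_le_sum fun k _ => mul_le_mul_of_nonneg_left (hstar k) (hGnn i k)
        _ = ‖α‖ * v i := by
            rw [hv]
            simp only [Matrix.mulVec, dotProduct, Finset.mul_sum]
            exact Finset.sum_congr rfl fun k _ => by ring
    -- α as c-weighted sum of y
    have hαc : α = ∑ j, (c j : ℂ) * y j := by
      rw [hα]
      simp only [Matrix.mulVec, dotProduct]
      rw [Finset.sum_comm]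
      refine Finset.sum_congr rfl fun j _ => ?_
      rw [hc]
      push_cast
      rw [Finset.sum_mul]
      refine Finset.sum_congr rfl fun i _ => ?_
      rw [hRC, Matrix.map_apply]
    have hcnn : ∀ j, 0 ≤ c j := heR
    -- sum of u is positive
    have hsumu : 0 < ∑ i, u i := by
      obtain ⟨i0, hi0⟩ := Function.ne_iff.mp hy0
      have : 0 < u i0 := by
        rw [hu]; simpa using norm_pos_iff.mpr (by simpa using hi0)
      exact lt_of_lt_of_le this (Finset.single_le_sum (fun i _ => hunn i) (Finset.mem_univ i0))
    have hα0 : α ≠ 0 := by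
      intro h0
      have hti : ∀ i, t * u i ≤ ∑ j, N i j * u j := by
        intro i; have := hui i; rw [h0] at this; simpa using this
      have hsum : t * ∑ i, u i ≤ s * ∑ i, u i := by
        calc t * ∑ i, u i = ∑ i, t * u i := Finset.mul_sum _ _ _
          _ ≤ ∑ i, ∑ j, N i j * u j := Finset.sum_le_sum fun i _ => hti i
          _ = ∑ j, (∑ i, N i j) * u j := by
              rw [Finset.sum_comm]
              exact Finset.sum_congr rfl fun j _ => (Finset.sum_mul _ _ _).symm
          _ ≤ ∑ j, s * u j := Finset.sum_le_sum fun j _ =>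
              mul_le_mul_of_nonneg_right (hcolNs j) (hunn j)
          _ = s * ∑ j, u j := (Finset.mul_sum _ _ _).symm
      nlinarith
    -- gamma ≥ 1
    have hγ1 : 1 ≤ ∑ j, c j * v j := by
      have h1 : ‖α‖ ≤ ∑ j, c j * u j := by
        rw [hαc]
        calc ‖∑ j, (c j : ℂ) * y j‖ ≤ ∑ j, ‖(c j : ℂ) * y j‖ :=
              norm_sum_le _ _
          _ = ∑ j, c j * u j := Finset.sum_congr rfl fun j _ => by
              rw [norm_mul, Complex.norm_real, Real.norm_eq_abs, abs_of_nonneg (hcnn j)]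
      have h2 : ∑ j, c j * u j ≤ ‖α‖ * ∑ j, c j * v j := by
        rw [Finset.mul_sum]
        refine Finset.sum_le_sum fun j _ => ?_
        calc c j * u j ≤ c j * (‖α‖ * v j) :=
              mul_le_mul_of_nonneg_left (huv j) (hcnn j)
          _ = ‖α‖ * (c j * v j) := by ring
      have hαpos : 0 < ‖α‖ := norm_pos_iff.mpr hα0
      nlinarith
    -- beta ≥ 1/t
    have ht0 : 0 < t := lt_trans hs hts
    have hβ : 1 / t ≤ ∑ i, v i := by
      have h1 : ∑ i, v i = ∑ k, (∑ i, G i k) * p k := by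
        rw [hv]
        simp only [Matrix.mulVec, dotProduct]
        rw [Finset.sum_comm]
        exact Finset.sum_congr rfl fun k _ => (Finset.sum_mul _ _ _).symm
      rw [h1]
      calc 1 / t = ∑ k, (1 / t) * p k := by rw [← Finset.mul_sum, hp1, mul_one]
        _ ≤ ∑ k, (∑ i, G i k) * p k := by
            refine Finset.sum_le_sum fun k _ => mul_le_mul_of_nonneg_right ?_ (hp k)
            have h2 : 1 / t ≤ G k k := by
              rw [div_le_iff₀ ht0]
              linarith [hGd k, mul_comm t (G k k)]
            exact le_trans h2 (Finset.single_le_sum (fun i _ => hGnn i k) (Finset.mem_univ k))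
    -- the identity (t-s)β + γ = 1
    have hid2 : (t - s) * (∑ i, v i) + ∑ j, c j * v j = 1 := by
      have hWv : (t • (1 : Matrix (Fin K) (Fin K) ℝ) - N).mulVec v = p := by
        rw [hv, Matrix.mulVec_mulVec, hG1, Matrix.one_mulVec]
      have h1 : ∑ i, ((t • (1 : Matrix (Fin K) (Fin K) ℝ) - N).mulVec v) i = 1 := by
        rw [hWv]; exact hp1
      have h2 : ∑ i, ((t • (1 : Matrix (Fin K) (Fin K) ℝ) - N).mulVec v) i
          = ∑ j, (t - s + c j) * v j := by
        simp only [Matrix.mulVec, dotProduct]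
        rw [Finset.sum_comm]
        refine Finset.sum_congr rfl fun j _ => ?_
        rw [← Finset.sum_mul]
        congr 1
        have : ∑ i, (t • (1 : Matrix (Fin K) (Fin K) ℝ) - N) i j = t - ∑ i, N i j := by
          simp only [Matrix.sub_apply, Matrix.smul_apply, Matrix.one_apply, smul_eq_mul,
            Finset.sum_sub_distrib, mul_ite, mul_one, mul_zero]
          simp [Finset.sum_ite_eq']
        rw [this, hcolN j]
        ring
      rw [h2] at h1
      rw [← h1]
      rw [Finset.sum_congr rfl (fun j (_ : j ∈ Finset.univ) => (add_mul (t - s) (c j) (v j)))]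
      rw [Finset.sum_add_distrib, ← Finset.mul_sum]
    -- final contradiction
    have hβpos : 0 < ∑ i, v i := lt_of_lt_of_le (by positivity) hβ
    nlinarith
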